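/- arXiv:1611.02231 — 2 statements merged into one kernel-verified Lean document; each statement's English description precedes it below -/
import Mathlib

section
/- Let G be a graph containing pairwise edge-disjoint spanning trees T₁, …, T_t, and let C be an edge cut of G with |C| = t whose removal separates G into the two disjoint connected graphs G₁ and G₂. Then each spanning tree T_j contains exactly one edge of C, and each of G₁ and G₂ contains t pairwise edge-disjoint spanning trees (namely, for each i and j, the edges of T_j inside G_i form a spanning tree of G_i). -/
/-- A finite loopless multigraph on vertex type `V` with edge type `E`:
each edge `e` is given by its two (distinct) endpoints `fst e` and `snd e`.
Multiple edges are allowed, loops are not. -/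
structure Multigraph (V : Type) (E : Type) where
  fst : E → V
  snd : E → V
  loopless : ∀ e, fst e ≠ snd e

namespace Multigraph

variable {V E : Type} (G : Multigraph V E)

/-- `u` and `v` are joined by some edge belonging to the edge set `F`. -/
def AdjOn (F : Set E) (u v : V) : Prop :=
  ∃ e ∈ F, (G.fst e = u ∧ G.snd e = v) ∨ (G.fst e = v ∧ G.snd e = u)

/-- The subgraph with vertex set `S` and edge set `F` is a connected spanning
subgraph of the induced subgraph of `G` on `S`: all edges of `F` have both
endpoints in `S`, and any two vertices of `S` are joined by a walk using
edges of `F`. -/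
def ConnectedWithin (S : Set V) (F : Set E) : Prop :=
  (∀ e ∈ F, G.fst e ∈ S ∧ G.snd e ∈ S) ∧
    ∀ u ∈ S, ∀ v ∈ S, Relation.ReflTransGen (G.AdjOn F) u v

/-- The spanning subgraph of `G` with edge set `F` is connected. -/
def ConnectedOn (F : Set E) : Prop := G.ConnectedWithin Set.univ F

/-- `G` is a connected graph. -/
def Connected : Prop := G.ConnectedOn Set.univ

/-- `F` is the edge set of a spanning tree of the induced subgraph of `G`
on `S`, i.e. a minimal edge set making `S` connected. -/
def IsSpanningTreeWithin (S : Set V) (F : Set E) : Prop :=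
  G.ConnectedWithin S F ∧ ∀ F' ⊆ F, G.ConnectedWithin S F' → F' = F

/-- `F` is the edge set of a spanning tree of `G`:
a minimal edge set making `G` connected. -/
def IsSpanningTree (F : Set E) : Prop := G.IsSpanningTreeWithin Set.univ F

/-- `G` contains `t` pairwise edge-disjoint spanning trees. -/
def HasEdgeDisjointSpanningTrees (t : ℕ) : Prop :=
  ∃ T : Fin t → Set E, (∀ i, G.IsSpanningTree (T i)) ∧
    ∀ i j, i ≠ j → Disjoint (T i) (T j)

/-- The edge cut determined by the vertex set `S`: all edges with exactly
one endpoint in `S`. -/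
def cutEdges (S : Set V) : Set E :=
  {e | (G.fst e ∈ S ∧ G.snd e ∉ S) ∨ (G.fst e ∉ S ∧ G.snd e ∈ S)}

/-- `G` is `n`-edge-connected: it is connected and every edge cut has at
least `n` edges. -/
def EdgeConnected (n : ℕ) : Prop :=
  G.Connected ∧
    ∀ S : Set V, S.Nonempty → S ≠ Set.univ → n ≤ (G.cutEdges S).ncard

/-- An orientation of `G` is a map `o : E → Bool`: `o e = true` means `e` is
directed from `fst e` to `snd e`, and `o e = false` means the reverse.
`tail o e` is the initial vertex of `e` under the orientation `o`. -/
def tail (o : E → Bool) (e : E) : V := if o e then G.fst e else G.snd e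

/-- The terminal vertex of the edge `e` under the orientation `o`. -/
def head (o : E → Bool) (e : E) : V := if o e then G.snd e else G.fst e

/-- The number of edges belonging to `F` directed away from `v` by `o`. -/
noncomputable def outDegOn (F : Set E) (o : E → Bool) (v : V) : ℕ :=
  {e ∈ F | G.tail o e = v}.ncard

/-- The out-degree of `v` under the orientation `o`. -/
noncomputable def outDeg (o : E → Bool) (v : V) : ℕ := G.outDegOn Set.univ o v

/-- The in-degree of `v` under the orientation `o`. -/
noncomputable def inDeg (o : E → Bool) (v : V) : ℕ := {e | G.head o e = v}.ncard

/-- The degree of `v` in the spanning subgraph with edge set `F`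
(there are no loops, so each edge at `v` counts once). -/
noncomputable def degOn (F : Set E) (v : V) : ℕ := {e ∈ F | G.fst e = v ∨ G.snd e = v}.ncard

/-- `o` is an `f`-orientation of `G` (modulo `k`): the out-degree of every
vertex `v` is congruent to `f v` modulo `k`. -/
def IsModOrientation (k : ℕ) (f : V → ZMod k) (o : E → Bool) : Prop :=
  ∀ v, (G.outDeg o v : ZMod k) = f v

/-- `G` is `Z_3`-connected: for every `f : V → ZMod 3` with
`|E(G)| ≡ ∑ v, f v (mod 3)`, `G` has an `f`-orientation. -/
def Z3Connected [Fintype V] [Fintype E] : Prop :=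
  ∀ f : V → ZMod 3, (Nat.card E : ZMod 3) = ∑ v, f v →
    ∃ o : E → Bool, G.IsModOrientation 3 f o

/-- `G` is a simple graph: no two distinct edges have the same endpoints
(and there are no loops, by definition of `Multigraph`). -/
def IsSimple : Prop :=
  ∀ e e' : E, s(G.fst e, G.snd e) = s(G.fst e', G.snd e') → e = e'

/-- `G` admits a decomposition of its edge set into stars with `k` edges:
a partition of `E` into parts, each consisting of `k` edges sharing a
common center vertex. -/
def HasStarDecomposition (k : ℕ) : Prop :=
  ∃ P : Set (Set E), (∀ e : E, ∃! p, p ∈ P ∧ e ∈ p) ∧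
    ∀ p ∈ P, ∃ c : V, (∀ e ∈ p, G.fst e = c ∨ G.snd e = c) ∧ p.ncard = k

end Multigraph


section Aux

variable {V E : Type}

lemma cross_exists {R : V → V → Prop} {S : Set V} {u v : V}
    (h : Relation.ReflTransGen R u v) (hu : u ∈ S) :
    v ∉ S → ∃ x y, x ∈ S ∧ y ∉ S ∧ R x y := by
  induction h with
  | refl => exact fun hv => absurd hu hv
  | @tail b c hub hbc ih =>
    intro hv
    by_cases hb : b ∈ S
    · exact ⟨b, c, hb, hv, hbc⟩
    · exact ih hb

lemma rtg_lift {R R' : V → V → Prop} (φ : V → V)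
    (h : ∀ x y, R x y → Relation.ReflTransGen R' (φ x) (φ y))
    {u v : V} (huv : Relation.ReflTransGen R u v) :
    Relation.ReflTransGen R' (φ u) (φ v) := by
  induction huv with
  | refl => exact .refl
  | tail _ hbc ih => exact ih.trans (h _ _ hbc)

lemma adjOn_symm (G : Multigraph V E) (F : Set E) :
    Symmetric (G.AdjOn F) := by
  rintro x y ⟨f, hf, h⟩
  exact ⟨f, hf, h.symm.imp id id⟩

lemma adjOn_mono (G : Multigraph V E) {F F' : Set E} (h : F ⊆ F') {x y : V} :
    G.AdjOn F x y → G.AdjOn F' x y := by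
  rintro ⟨f, hf, hxy⟩
  exact ⟨f, h hf, hxy⟩

lemma cutEdges_compl (G : Multigraph V E) (S : Set V) :
    G.cutEdges Sᶜ = G.cutEdges S := by
  ext f
  simp only [Multigraph.cutEdges, Set.mem_setOf_eq, Set.mem_compl_iff, not_not]
  tauto

lemma within_connected (G : Multigraph V E) (S : Set V) (Tj : Set E) (e : E)
    (hconn : ∀ u v : V, Relation.ReflTransGen (G.AdjOn Tj) u v)
    (he : e ∈ Tj) (heC : e ∈ G.cutEdges S)
    (huniq : ∀ x ∈ Tj, x ∈ G.cutEdges S → x = e) :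
    G.ConnectedWithin S {x ∈ Tj | G.fst x ∈ S ∧ G.snd x ∈ S} := by
  classical
  set a := if G.fst e ∈ S then G.fst e else G.snd e with ha_def
  have haS : a ∈ S := by
    rcases heC with ⟨h1, h2⟩ | ⟨h1, h2⟩ <;> simp [ha_def, h1, h2]
  set φ : V → V := fun x => if x ∈ S then x else a with hφ_def
  have hend : ∀ p, (p = G.fst e ∨ p = G.snd e) → φ p = a := by
    intro p hp
    by_cases hpS : p ∈ S
    · have : p = a := by
        rcases heC with ⟨h1, h2⟩ | ⟨h1, h2⟩
        · rcases hp with rfl | rfl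
          · simp [ha_def, h1]
          · exact absurd hpS h2
        · rcases hp with rfl | rfl
          · exact absurd hpS h1
          · simp [ha_def, h1]
      simp [hφ_def, hpS, this]
    · simp [hφ_def, hpS]
  have step : ∀ x y, G.AdjOn Tj x y →
      Relation.ReflTransGen (G.AdjOn {x ∈ Tj | G.fst x ∈ S ∧ G.snd x ∈ S}) (φ x) (φ y) := by
    rintro x y ⟨f, hf, hxy⟩
    by_cases hfx : G.fst f ∈ S <;> by_cases hfy : G.snd f ∈ S
    · -- both endpoints in S
      have hx : x ∈ S := by rcases hxy with ⟨h1, h2⟩ | ⟨h1, h2⟩ <;> [exact h1 ▸ hfx; exact h2 ▸ hfy]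
      have hy : y ∈ S := by rcases hxy with ⟨h1, h2⟩ | ⟨h1, h2⟩ <;> [exact h2 ▸ hfy; exact h1 ▸ hfx]
      have : G.AdjOn {x ∈ Tj | G.fst x ∈ S ∧ G.snd x ∈ S} x y :=
        ⟨f, ⟨hf, hfx, hfy⟩, hxy⟩
      simpa [hφ_def, hx, hy] using Relation.ReflTransGen.single this
    · -- f is the cut edge
      have hfe : f = e := huniq f hf (Or.inl ⟨hfx, hfy⟩)
      subst hfe
      have hx : φ x = a := hend x (by rcases hxy with ⟨h1, _⟩ | ⟨_, h2⟩ <;> [exact Or.inl h1.symm; exact Or.inr h2.symm])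
      have hy : φ y = a := hend y (by rcases hxy with ⟨_, h2⟩ | ⟨h1, _⟩ <;> [exact Or.inr h2.symm; exact Or.inl h1.symm])
      rw [hx, hy]
    · have hfe : f = e := huniq f hf (Or.inr ⟨hfx, hfy⟩)
      subst hfe
      have hx : φ x = a := hend x (by rcases hxy with ⟨h1, _⟩ | ⟨_, h2⟩ <;> [exact Or.inl h1.symm; exact Or.inr h2.symm])
      have hy : φ y = a := hend y (by rcases hxy with ⟨_, h2⟩ | ⟨h1, _⟩ <;> [exact Or.inr h2.symm; exact Or.inl h1.symm])
      rw [hx, hy]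
    · -- both endpoints outside S
      have hx : x ∉ S := by rcases hxy with ⟨h1, h2⟩ | ⟨h1, h2⟩ <;> [exact h1 ▸ hfx; exact h2 ▸ hfy]
      have hy : y ∉ S := by rcases hxy with ⟨h1, h2⟩ | ⟨h1, h2⟩ <;> [exact h2 ▸ hfy; exact h1 ▸ hfx]
      have hpx : φ x = a := by simp [hφ_def, hx]
      have hpy : φ y = a := by simp [hφ_def, hy]
      rw [hpx, hpy]
  constructor
  · rintro f ⟨hf, h1, h2⟩
    exact ⟨h1, h2⟩
  · intro u hu v hv
    have := rtg_lift φ step (hconn u v)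
    simpa [hφ_def, hu, hv] using this

lemma key_lemma (G : Multigraph V E) (S : Set V) (Tj : Set E) (e : E)
    (hTj : G.IsSpanningTree Tj)
    (he : e ∈ Tj) (heC : e ∈ G.cutEdges S)
    (huniq : ∀ x ∈ Tj, x ∈ G.cutEdges S → x = e) :
    G.IsSpanningTreeWithin S {x ∈ Tj | G.fst x ∈ S ∧ G.snd x ∈ S} := by
  classical
  have hconn : ∀ u v : V, Relation.ReflTransGen (G.AdjOn Tj) u v :=
    fun u v => hTj.1.2 u trivial v trivial
  have hS1 := within_connected G S Tj e hconn he heC huniq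
  have heC' : e ∈ G.cutEdges Sᶜ := by rw [cutEdges_compl]; exact heC
  have huniq' : ∀ x ∈ Tj, x ∈ G.cutEdges Sᶜ → x = e := by
    intro x hx hxC
    exact huniq x hx (by rwa [cutEdges_compl] at hxC)
  have hS2 := within_connected G Sᶜ Tj e hconn he heC' huniq'
  refine ⟨hS1, ?_⟩
  intro F' hF'sub hF'
  set T' : Set E := F' ∪ {x ∈ Tj | ¬(G.fst x ∈ S ∧ G.snd x ∈ S)} with hT'_def
  have hT'sub : T' ⊆ Tj := by
    rintro x (hx | hx)
    · exact (hF'sub hx).1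
    · exact hx.1
  have heT' : e ∈ T' := by
    refine Or.inr ⟨he, ?_⟩
    rcases heC with ⟨h1, h2⟩ | ⟨h1, h2⟩ <;> tauto
  obtain ⟨a, b, haS, hbS, hab⟩ : ∃ a b, a ∈ S ∧ b ∉ S ∧ G.AdjOn T' a b := by
    rcases heC with ⟨h1, h2⟩ | ⟨h1, h2⟩
    · exact ⟨_, _, h1, h2, e, heT', Or.inl ⟨rfl, rfl⟩⟩
    · exact ⟨_, _, h2, h1, e, heT', Or.inr ⟨rfl, rfl⟩⟩
  have hsymm : Symmetric (Relation.ReflTransGen (G.AdjOn T')) :=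
    haveI : Std.Symm (G.AdjOn T') := ⟨adjOn_symm G T'⟩
    fun x y h => (Relation.ReflTransGen.symmetric (r := G.AdjOn T')).symm x y h
  have hreach : ∀ w : V, Relation.ReflTransGen (G.AdjOn T') w (if w ∈ S then a else b) := by
    intro w
    by_cases hw : w ∈ S
    · have := hF'.2 w hw a haS
      simpa [hw] using Relation.ReflTransGen.mono (fun x y => adjOn_mono G Set.subset_union_left) _ _ this
    · have := hS2.2 w hw b hbS
      have hsub2 : {x ∈ Tj | G.fst x ∈ Sᶜ ∧ G.snd x ∈ Sᶜ} ⊆ T' := by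
        rintro x ⟨hx, h1, h2⟩
        exact Or.inr ⟨hx, fun h => h1 h.1⟩
      simpa [hw] using Relation.ReflTransGen.mono (fun x y => adjOn_mono G hsub2) _ _ this
  have hT'conn : G.ConnectedWithin Set.univ T' := by
    refine ⟨fun _ _ => ⟨trivial, trivial⟩, ?_⟩
    intro u _ v _
    have hcc : Relation.ReflTransGen (G.AdjOn T')
        (if u ∈ S then a else b) (if v ∈ S then a else b) := by
      by_cases hu : u ∈ S <;> by_cases hv : v ∈ S
      · simp only [if_pos hu, if_pos hv]
        exact Relation.ReflTransGen.refl
      · simp only [if_pos hu, if_neg hv]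
        exact Relation.ReflTransGen.single hab
      · simp only [if_neg hu, if_pos hv]
        exact Relation.ReflTransGen.single (adjOn_symm G T' hab)
      · simp only [if_neg hu, if_neg hv]
        exact Relation.ReflTransGen.refl
    exact ((hreach u).trans hcc).trans (hsymm (hreach v))
  have hTeq : T' = Tj := hTj.2 T' hT'sub hT'conn
  apply Set.Subset.antisymm hF'sub
  rintro x ⟨hx1, hx2⟩
  have hxT : x ∈ T' := hTeq ▸ hx1
  rcases hxT with h | h
  · exact h
  · exact absurd hx2 h.2

end Aux

/-- let `G` contain pairwise edge-disjoint spanning trees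
`T₁, …, T_t`, and let `C` be an edge cut of `G` with `|C| = t` separating `G`
into the two disjoint connected graphs `G₁` (induced on `S`) and `G₂` (induced
on `Sᶜ`). Then every tree `T j` contains exactly one edge of `C`, and for each
`i` and `j` the edges of `T j` inside `G_i` form a spanning tree of `G_i`. -/
theorem spanning_trees_split_along_minimum_cut
    {V E : Type} [Fintype V] [Fintype E] (G : Multigraph V E)
    (t : ℕ) (T : Fin t → Set E)
    (hT : ∀ j, G.IsSpanningTree (T j))
    (hTdisj : ∀ i j, i ≠ j → Disjoint (T i) (T j))
    (S : Set V) (hS : S.Nonempty) (hS' : S ≠ Set.univ)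
    (C : Set E) (hC : C = G.cutEdges S) (hCcard : C.ncard = t)
    (hG₁ : G.ConnectedWithin S {e | G.fst e ∈ S ∧ G.snd e ∈ S})
    (hG₂ : G.ConnectedWithin Sᶜ {e | G.fst e ∈ Sᶜ ∧ G.snd e ∈ Sᶜ}) :
    (∀ j, (T j ∩ C).ncard = 1) ∧
      (∀ j, G.IsSpanningTreeWithin S {e ∈ T j | G.fst e ∈ S ∧ G.snd e ∈ S} ∧
        G.IsSpanningTreeWithin Sᶜ {e ∈ T j | G.fst e ∈ Sᶜ ∧ G.snd e ∈ Sᶜ}) := by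
  classical
  have hne : ∀ j, (T j ∩ C).Nonempty := by
    intro j
    obtain ⟨u, hu⟩ := hS
    obtain ⟨v, hv⟩ : ∃ v, v ∉ S := by
      by_contra h
      push_neg at h
      exact hS' (Set.eq_univ_iff_forall.2 h)
    have hconn : Relation.ReflTransGen (G.AdjOn (T j)) u v := (hT j).1.2 u trivial v trivial
    obtain ⟨x, y, hx, hy, f, hf, hor⟩ := cross_exists hconn hu hv
    refine ⟨f, hf, ?_⟩
    rw [hC]
    rcases hor with ⟨h1, h2⟩ | ⟨h1, h2⟩
    · exact Or.inl ⟨h1 ▸ hx, h2 ▸ hy⟩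
    · exact Or.inr ⟨h1 ▸ hy, h2 ▸ hx⟩
  have hcard1 : ∀ j, (T j ∩ C).ncard = 1 := by
    have hdisj : ∀ i j : Fin t, i ≠ j →
        Disjoint (T i ∩ C).toFinset (T j ∩ C).toFinset := by
      intro i j hij
      rw [Set.disjoint_toFinset]
      exact ((hTdisj i j hij).mono Set.inter_subset_left Set.inter_subset_left)
    have hsum : ∑ j : Fin t, (T j ∩ C).toFinset.card ≤ C.toFinset.card := by
      rw [← Finset.card_biUnion (fun i _ j _ hij => hdisj i j hij)]
      apply Finset.card_le_card
      intro x hx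
      simp only [Finset.mem_biUnion, Set.mem_toFinset, Set.mem_inter_iff] at hx ⊢
      obtain ⟨i, _, hi⟩ := hx
      exact hi.2
    have hCt : C.toFinset.card = t := by
      rw [← Set.ncard_eq_toFinset_card']; exact hCcard
    have h1 : ∀ j, 1 ≤ (T j ∩ C).toFinset.card := fun j =>
      Finset.card_pos.2 (Set.toFinset_nonempty.2 (hne j))
    intro j
    rw [Set.ncard_eq_toFinset_card']
    by_contra hj
    have h2 : 2 ≤ (T j ∩ C).toFinset.card := by
      have := h1 j; omega
    have hsplit : (T j ∩ C).toFinset.card +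
        ∑ i ∈ Finset.univ.erase j, (T i ∩ C).toFinset.card =
        ∑ i : Fin t, (T i ∩ C).toFinset.card :=
      Finset.add_sum_erase Finset.univ (fun i => (T i ∩ C).toFinset.card) (Finset.mem_univ j)
    have hrest : (Finset.univ.erase j).card ≤
        ∑ i ∈ Finset.univ.erase j, (T i ∩ C).toFinset.card := by
      calc (Finset.univ.erase j).card = ∑ _i ∈ Finset.univ.erase j, 1 := by simp
        _ ≤ _ := Finset.sum_le_sum (fun i _ => h1 i)
    have hcardu : (Finset.univ.erase j).card = t - 1 := by
      rw [Finset.card_erase_of_mem (Finset.mem_univ j)]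
      simp
    have ht1 : 0 < t := j.pos
    omega
  refine ⟨hcard1, ?_⟩
  intro j
  obtain ⟨e, hej⟩ := Set.ncard_eq_one.mp (hcard1 j)
  have heTC : e ∈ T j ∩ C := hej ▸ rfl
  have he : e ∈ T j := heTC.1
  have heC : e ∈ G.cutEdges S := hC ▸ heTC.2
  have huniq : ∀ x ∈ T j, x ∈ G.cutEdges S → x = e := by
    intro x hx hxC
    have : x ∈ T j ∩ C := ⟨hx, hC ▸ hxC⟩
    rw [hej] at this
    exact this
  constructor
  · exact key_lemma G S (T j) e (hT j) he heC huniq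
  · exact key_lemma G Sᶜ (T j) e (hT j) he
      (by rw [cutEdges_compl]; exact heC)
      (fun x hx hxC => huniq x hx (by rwa [cutEdges_compl] at hxC))
end

section
/- Let k be an integer with k ≥ 3, and let S_k denote the star with k edges. Suppose that every simple graph H with k pairwise edge-disjoint spanning trees and with |E(H)| divisible by k admits an edge-decomposition into copies of S_k. Then for every graph G containing k pairwise edge-disjoint spanning trees and every mapping f : V(G) → Z_k with |E(G)| ≡ Σ_{v∈V(G)} f(v) (mod k), the graph G has an f-orientation. -/
/-! ### Auxiliary machinery -/

open Multigraph Finset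

section ShrinkTree

theorem exists_spanningTree_subset {V E : Type} [Finite E] (G : Multigraph V E) :
    ∀ (F : Set E), G.ConnectedOn F → ∃ F' ⊆ F, G.IsSpanningTree F' := by
  intro F
  induction' hn : F.ncard using Nat.strong_induction_on with n ih generalizing F
  intro h
  by_cases hmin : ∀ F' ⊆ F, G.ConnectedOn F' → F' = F
  · exact ⟨F, subset_rfl, h, hmin⟩
  · push_neg at hmin
    obtain ⟨F', hsub, hconn, hne⟩ := hmin
    have hlt : F'.ncard < F.ncard :=
      Set.ncard_lt_ncard (ssubset_of_subset_of_ne hsub hne) (Set.toFinite F)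
    obtain ⟨F'', h1, h2⟩ := ih F'.ncard (hn ▸ hlt) F' rfl hconn
    exact ⟨F'', h1.trans hsub, h2⟩

end ShrinkTree

section Zig

def zig (k : ℕ) (i : ℕ) (j : ℕ) : ZMod (2*k) :=
  if j % 2 = 0 then (i : ZMod (2*k)) - (j/2 : ℕ) else (i : ZMod (2*k)) + (j/2 : ℕ) + 1

lemma natCast_injOn_zmod {n : ℕ} {a b : ℕ} (ha : a < n) (hb : b < n)
    (h : (a : ZMod n) = b) : a = b := by
  have : NeZero n := ⟨by omega⟩
  have := congrArg ZMod.val h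
  rwa [ZMod.val_cast_of_lt ha, ZMod.val_cast_of_lt hb] at this

lemma zig_injOn (k : ℕ) (hk : 3 ≤ k) (i : ℕ) : ∀ j < 2*k, ∀ j' < 2*k,
    zig k i j = zig k i j' → j = j' := by
  intro j hj j' hj' h
  have hsum : ∀ a b : ℕ, a < k → b < k →
      ((i : ZMod (2*k)) - a = (i : ZMod (2*k)) + b + 1) → False := by
    intro a b ha hb hab
    have hz : ((a + b + 1 : ℕ) : ZMod (2*k)) = 0 := by push_cast; linear_combination -hab
    have hnz : NeZero (2*k) := ⟨by omega⟩
    have hdvd : 2*k ∣ a + b + 1 := (ZMod.natCast_eq_zero_iff _ _).mp hz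
    have := Nat.le_of_dvd (by omega) hdvd
    omega
  unfold zig at h
  rcases Nat.mod_two_eq_zero_or_one j with he | ho <;>
    rcases Nat.mod_two_eq_zero_or_one j' with he' | ho'
  · rw [if_pos he, if_pos he'] at h
    have := natCast_injOn_zmod (n := 2*k) (by omega) (by omega) (sub_right_inj.mp h)
    omega
  · rw [if_pos he, if_neg (by omega)] at h
    exact absurd h (fun hh => hsum _ _ (by omega) (by omega) hh)
  · rw [if_neg (by omega), if_pos he'] at h
    exact absurd h.symm (fun hh => hsum _ _ (by omega) (by omega) hh)
  · rw [if_neg (by omega), if_neg (by omega)] at h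
    have hc : ((j/2 : ℕ) : ZMod (2*k)) = ((j'/2 : ℕ) : ZMod (2*k)) := by
      linear_combination h
    have := natCast_injOn_zmod (n := 2*k) (by omega) (by omega) hc
    omega

lemma zig_surj (k : ℕ) (hk : 3 ≤ k) (i : ℕ) (x : ZMod (2*k)) :
    ∃ j < 2*k, zig k i j = x := by
  have hnz : NeZero (2*k) := ⟨by omega⟩
  set d := (x - (i : ZMod (2*k))).val with hd
  have hdlt : d < 2*k := ZMod.val_lt _
  have hx : x = (i : ZMod (2*k)) + (d : ℕ) := by
    rw [hd, ZMod.natCast_val, ZMod.cast_id]; ring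
  by_cases h0 : d = 0
  · exact ⟨0, by omega, by simp [zig, hx, h0]⟩
  by_cases h1 : d ≤ k
  · refine ⟨2*(d-1)+1, by omega, ?_⟩
    rw [zig, if_neg (by omega)]
    have h2 : (2*(d-1)+1)/2 = d - 1 := by omega
    rw [h2, hx]
    have h3 : ((d - 1 : ℕ) : ZMod (2*k)) + 1 = (d : ℕ) := by
      have h4 : d - 1 + 1 = d := by omega
      rw [← h4]; push_cast; ring
    rw [add_assoc, h3]
  · refine ⟨2*(2*k-d), by omega, ?_⟩
    rw [zig, if_pos (by omega)]
    have h2 : (2*(2*k-d))/2 = 2*k-d := by omega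
    rw [h2, hx]
    have h3 : ((2*k - d : ℕ) : ZMod (2*k)) + ((d : ℕ) : ZMod (2*k)) = 0 := by
      rw [← Nat.cast_add]
      have h4 : 2*k - d + d = 2*k := by omega
      rw [h4, ZMod.natCast_self]
    have h5 : ((2*k - d : ℕ) : ZMod (2*k)) = - (d : ℕ) := eq_neg_of_add_eq_zero_left h3
    rw [h5]; ring

lemma zig_zero (k : ℕ) (i' : ℕ) : zig k i' 0 = (i' : ZMod (2*k)) := by simp [zig]

lemma zig_pair_sum (k : ℕ) (i j : ℕ) :
    zig k i j + zig k i (j+1) = 2*(i : ZMod (2*k)) + (if j % 2 = 0 then 1 else 0) := by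
  rcases Nat.mod_two_eq_zero_or_one j with he | ho
  · rw [zig, zig, if_pos he, if_neg (by omega), if_pos he]
    have : (j+1)/2 = j/2 := by omega
    rw [this]; ring
  · rw [zig, zig, if_neg (by omega), if_pos (by omega), if_neg (by omega)]
    have : (j+1)/2 = j/2 + 1 := by omega
    rw [this]; push_cast; ring

end Zig

section Counting

lemma ncard_filter {α : Type} [Fintype α] (P : α → Prop) [DecidablePred P] :
    {x | P x}.ncard = (Finset.univ.filter P).card := by
  rw [Set.ncard_eq_toFinset_card']
  simp

lemma outDeg_eq_card {W F : Type} [Fintype F] (H : Multigraph W F) (o : F → Bool) (w : W)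
    [DecidablePred (fun e => H.tail o e = w)] :
    H.outDeg o w = (Finset.univ.filter (fun e => H.tail o e = w)).card := by
  unfold Multigraph.outDeg Multigraph.outDegOn
  rw [show {e ∈ Set.univ | H.tail o e = w} = {e | H.tail o e = w} by simp, ncard_filter]

lemma filter_sum_card {α β : Type} [Fintype α] [Fintype β] (p : α ⊕ β → Prop)
    [DecidablePred p] :
    (Finset.univ.filter p).card =
      (Finset.univ.filter (fun a => p (Sum.inl a))).card +
        (Finset.univ.filter (fun b => p (Sum.inr b))).card := by
  classical
  rw [← Fintype.card_subtype, ← Fintype.card_subtype, ← Fintype.card_subtype,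
    Fintype.card_congr (Equiv.subtypeSum (p := p)), Fintype.card_sum]

lemma cluster_sum {W F α : Type} [Fintype W] [Fintype F] [DecidableEq W] [DecidableEq α]
    (H : Multigraph W F) (o : F → Bool) (cl : W → α) (v : α) :
    ∑ w ∈ Finset.univ.filter (fun w => cl w = v), H.outDeg o w
      = (Finset.univ.filter (fun e => cl (H.tail o e) = v)).card := by
  classical
  rw [Finset.card_eq_sum_card_fiberwise (f := H.tail o)
    (t := Finset.univ.filter (fun w => cl w = v))
    (fun x hx => by
      simp only [Finset.coe_filter, Finset.coe_univ, Set.mem_univ, Set.mem_setOf_eq, Finset.mem_univ, true_and] at hx ⊢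
      exact hx)]
  refine Finset.sum_congr rfl ?_
  intro w hw
  simp only [Finset.mem_filter, Finset.mem_univ, true_and] at hw
  rw [outDeg_eq_card]
  congr 1
  ext e
  simp only [Finset.mem_filter, Finset.mem_univ, true_and]
  exact ⟨fun h => ⟨by rw [h, hw], h⟩, fun h => h.2⟩

lemma filter_fst_pred_card {α β : Type} [Fintype α] [Fintype β] (q : α → Prop)
    [DecidablePred q] :
    (Finset.univ.filter (fun x : α × β => q x.1)).card
      = (Finset.univ.filter q).card * Fintype.card β := by
  classical
  rw [← Fintype.card_subtype, ← Fintype.card_subtype, ← Fintype.card_prod]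
  exact Fintype.card_congr
    ⟨fun x => (⟨x.1.1, x.2⟩, x.1.2), fun y => ⟨(y.1.1, y.2), y.1.2⟩,
      fun x => rfl, fun y => rfl⟩

lemma filter_sigma_card {α : Type} [Fintype α] [DecidableEq α] (g : α → ℕ) (v : α) :
    (Finset.univ.filter (fun x : (a : α) × Fin (g a) => x.1 = v)).card = g v := by
  classical
  rw [← Fintype.card_subtype, ← Fintype.card_fin (g v)]
  refine Fintype.card_congr ⟨fun x => Fin.cast (congrArg g x.2) x.1.2,
    fun j => ⟨⟨v, j⟩, rfl⟩, ?_, fun j => rfl⟩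
  rintro ⟨⟨a, j⟩, h⟩
  subst h
  rfl

lemma exists_orientation_of_starDecomp {W F : Type} [Fintype W] [Fintype F] [Nonempty W]
    (H : Multigraph W F) (k : ℕ) (hSD : H.HasStarDecomposition k) :
    ∃ o : F → Bool, ∀ w : W, (H.outDeg o w : ZMod k) = 0 := by
  classical
  obtain ⟨P, hPu, hPs⟩ := hSD
  set part : F → Set F := fun e => (hPu e).choose with hpart
  have hp1 : ∀ e, part e ∈ P ∧ e ∈ part e := fun e => (hPu e).choose_spec.1
  have hp2 : ∀ e, ∀ p ∈ P, e ∈ p → p = part e := fun e p hp hep =>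
    ((hPu e).choose_spec.2 p ⟨hp, hep⟩)
  set cent : Set F → W := fun p =>
    Classical.epsilon (fun c => ∀ e ∈ p, H.fst e = c ∨ H.snd e = c) with hcentdef
  have hcent : ∀ p ∈ P, ∀ e ∈ p, H.fst e = cent p ∨ H.snd e = cent p := by
    intro p hp
    obtain ⟨c, hc, _⟩ := hPs p hp
    exact Classical.epsilon_spec (⟨c, hc⟩ : ∃ c, ∀ e ∈ p, H.fst e = c ∨ H.snd e = c)
  refine ⟨fun e => decide (H.fst e = cent (part e)), ?_⟩
  intro w
  have tail_eq : ∀ e, H.tail (fun e => decide (H.fst e = cent (part e))) e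
      = cent (part e) := by
    intro e
    unfold Multigraph.tail
    by_cases h : H.fst e = cent (part e)
    · simp [h]
    · rcases hcent (part e) (hp1 e).1 e (hp1 e).2 with h' | h'
      · exact absurd h' h
      · simp [h, h']
  rw [outDeg_eq_card]
  set s := Finset.univ.filter (fun e => cent (part e) = w) with hs
  rw [show Finset.univ.filter
      (fun e => H.tail (fun e => decide (H.fst e = cent (part e))) e = w) = s from by
    ext e; simp [hs, tail_eq]]
  set t := s.image part with ht
  rw [Finset.card_eq_sum_card_fiberwise (f := part) (t := t)
    (fun x hx => Finset.mem_image_of_mem part hx)]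
  have hfib : ∀ p ∈ t, (s.filter (fun e => part e = p)).card = k := by
    intro p hp
    obtain ⟨e0, he0, hpe0⟩ := Finset.mem_image.mp hp
    have hpP : p ∈ P := hpe0 ▸ (hp1 e0).1
    have hcw : cent p = w := by
      have h' := (Finset.mem_filter.mp he0).2
      rw [hpe0] at h'
      exact h'
    have : s.filter (fun e => part e = p) = p.toFinset := by
      ext e
      simp only [Finset.mem_filter, Set.mem_toFinset, hs, Finset.mem_univ, true_and]
      constructor
      · rintro ⟨_, hpp⟩; rw [← hpp]; exact (hp1 e).2
      · intro hep
        have heq := (hp2 e p hpP hep).symm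
        exact ⟨by rw [heq]; exact hcw, heq⟩
    obtain ⟨_, _, hnc⟩ := hPs p hpP
    rw [this, ← Set.ncard_eq_toFinset_card', hnc]
  rw [Finset.sum_congr rfl hfib, Finset.sum_const, smul_eq_mul]
  push_cast
  rw [ZMod.natCast_self, mul_zero]

end Counting

section Construction
variable {V E : Type}

def vtx (G : Multigraph V E) (c : E × Bool) : V := if c.2 then G.fst c.1 else G.snd c.1

def rr (k : ℕ) (f : V → ZMod k) (v : V) : ℕ := k + (-f v).val

abbrev WW (V E : Type) (k : ℕ) : Type := (E × Bool) ⊕ (V × Option (ZMod (2*k)))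
abbrev EE (V E : Type) (k : ℕ) (f : V → ZMod k) : Type :=
  E ⊕ ((V × Fin k × Fin (2*k-1)) ⊕ (((E × Bool) × Fin k) ⊕ ((v : V) × Fin (rr k f v))))

variable (k : ℕ) (G : Multigraph V E) (f : V → ZMod k)

def Hfst : EE V E k f → WW V E k
  | .inl e => .inl (e, true)
  | .inr (.inl (v, i, j)) => .inr (v, some (zig k i j))
  | .inr (.inr (.inl (c, _))) => .inl c
  | .inr (.inr (.inr ⟨v, _⟩)) => .inr (v, none)

def Hsnd : EE V E k f → WW V E k
  | .inl e => .inl (e, false)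
  | .inr (.inl (v, i, j)) => .inr (v, some (zig k (i:ℕ) ((j:ℕ)+1)))
  | .inr (.inr (.inl (c, i))) => .inr (vtx G c, some ((i:ℕ) : ZMod (2*k)))
  | .inr (.inr (.inr ⟨v, j⟩)) => .inr (v, some ((j:ℕ) : ZMod (2*k)))

def HH (hk : 3 ≤ k) : Multigraph (WW V E k) (EE V E k f) where
  fst := Hfst k f
  snd := Hsnd k G f
  loopless := by
    rintro (e | ⟨v, i, j⟩ | ⟨c, i⟩ | ⟨v, j⟩) h <;>
      simp only [Hfst, Hsnd, Sum.inl.injEq, Sum.inr.injEq, Prod.mk.injEq,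
        Option.some.injEq, reduceCtorEq] at h
    · exact absurd h.2 (by simp)
    · exact absurd (zig_injOn k hk i j (by have := j.isLt; omega) ((j:ℕ)+1)
        (by have := j.isLt; omega) h.2) (by omega)
    · exact h.2

set_option linter.unnecessarySeqFocus false in
lemma HH_simple (hk : 3 ≤ k) : (HH k G f hk).IsSimple := by
  have hnz : NeZero (2*k) := ⟨by omega⟩
  rintro (e | ⟨v, i, j⟩ | ⟨c, i⟩ | ⟨v, j⟩) (e' | ⟨v', i', j'⟩ | ⟨c', i'⟩ | ⟨v', j'⟩) h <;>
    rw [Sym2.eq_iff] at h <;>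
    simp only [HH, Hfst, Hsnd, Sum.inl.injEq, Sum.inr.injEq, Prod.mk.injEq,
      Option.some.injEq, reduceCtorEq, false_and, and_false, or_false, false_or,
      and_true, true_and] at h
  -- main-main
  · simp [h.1]
  -- core-core
  · obtain ⟨hv, hz⟩ : v = v' ∧ ((zig k i j = zig k i' j' ∧ zig k (i:ℕ) ((j:ℕ)+1) = zig k (i':ℕ) ((j':ℕ)+1)) ∨
      (zig k i j = zig k (i':ℕ) ((j':ℕ)+1) ∧ zig k (i:ℕ) ((j:ℕ)+1) = zig k i' (j':ℕ))) := by
      rcases h with ⟨⟨hv, h1⟩, _, h2⟩ | ⟨⟨hv, h1⟩, _, h2⟩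
      · exact ⟨hv, Or.inl ⟨h1, h2⟩⟩
      · exact ⟨hv, Or.inr ⟨h1, h2⟩⟩
    subst hv
    have hsum : zig k i j + zig k (i:ℕ) ((j:ℕ)+1) = zig k i' (j':ℕ) + zig k (i':ℕ) ((j':ℕ)+1) := by
      rcases hz with ⟨h1, h2⟩ | ⟨h1, h2⟩ <;> rw [h1, h2] <;> ring
    rw [zig_pair_sum, zig_pair_sum] at hsum
    have hii : (i:ℕ) = (i':ℕ) ∧ ((j:ℕ) % 2 = (j':ℕ) % 2) := by
      rcases Nat.mod_two_eq_zero_or_one (j:ℕ) with hp | hp <;>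
        rcases Nat.mod_two_eq_zero_or_one (j':ℕ) with hp' | hp'
      · rw [if_pos hp, if_pos hp'] at hsum
        have hc : ((2*(i:ℕ)+1 : ℕ) : ZMod (2*k)) = ((2*(i':ℕ)+1 : ℕ) : ZMod (2*k)) := by
          push_cast; linear_combination hsum
        have := natCast_injOn_zmod (n := 2*k) (by have := i.isLt; omega)
          (by have := i'.isLt; omega) hc
        omega
      · rw [if_pos hp, if_neg (by omega)] at hsum
        have hc : ((2*(i:ℕ)+1 : ℕ) : ZMod (2*k)) = ((2*(i':ℕ) : ℕ) : ZMod (2*k)) := by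
          push_cast; linear_combination hsum
        have := natCast_injOn_zmod (n := 2*k) (by have := i.isLt; omega)
          (by have := i'.isLt; omega) hc
        omega
      · rw [if_neg (by omega), if_pos hp'] at hsum
        have hc : ((2*(i:ℕ) : ℕ) : ZMod (2*k)) = ((2*(i':ℕ)+1 : ℕ) : ZMod (2*k)) := by
          push_cast; linear_combination hsum
        have := natCast_injOn_zmod (n := 2*k) (by have := i.isLt; omega)
          (by have := i'.isLt; omega) hc
        omega
      · rw [if_neg (by omega), if_neg (by omega)] at hsum
        have hc : ((2*(i:ℕ) : ℕ) : ZMod (2*k)) = ((2*(i':ℕ) : ℕ) : ZMod (2*k)) := by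
          push_cast; linear_combination hsum
        have := natCast_injOn_zmod (n := 2*k) (by have := i.isLt; omega)
          (by have := i'.isLt; omega) hc
        omega
    obtain ⟨hi, hpar⟩ := hii
    have hieq : i = i' := Fin.ext hi
    subst hieq
    have hjlt : (j:ℕ) + 1 < 2*k := by have := j.isLt; omega
    have hjlt' : (j':ℕ) + 1 < 2*k := by have := j'.isLt; omega
    rcases hz with ⟨h1, _⟩ | ⟨h1, h2⟩
    · have := zig_injOn k hk i (j:ℕ) (by omega) (j':ℕ) (by omega) h1
      simp [Fin.ext this]
    · have e1 := zig_injOn k hk i (j:ℕ) (by omega) ((j':ℕ)+1) hjlt' h1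
      have e2 := zig_injOn k hk i ((j:ℕ)+1) hjlt (j':ℕ) (by omega) h2
      omega
  -- copy-copy
  · obtain ⟨h1, _, h2⟩ := h
    subst h1
    have : (i:ℕ) = (i':ℕ) := natCast_injOn_zmod (n := 2*k)
      (by have := i.isLt; omega) (by have := i'.isLt; omega) h2
    simp [Fin.ext this]
  -- z-z
  · obtain ⟨hv, _, hj⟩ := h
    subst hv
    have hrlt : rr k f v ≤ 2*k := by
      have hnzk : NeZero k := ⟨by omega⟩
      have := (-f v).val_lt; unfold rr; omega
    have : (j:ℕ) = (j':ℕ) := natCast_injOn_zmod (n := 2*k)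
      (by have := j.isLt; omega) (by have := j'.isLt; omega) hj
    simp [Fin.ext this]

def SS (T : Fin k → Set E) (i : Fin k) : Set (EE V E k f) :=
  {x | match x with
    | .inl e => e ∈ T i
    | .inr (.inl (_, i', _)) => i' = i
    | .inr (.inr (.inl (_, i'))) => i' = i
    | .inr (.inr (.inr ⟨_, j⟩)) => (j:ℕ) = (i:ℕ)}

lemma SS_disjoint (T : Fin k → Set E) (hT : ∀ i j, i ≠ j → Disjoint (T i) (T j))
    (i j : Fin k) (hij : i ≠ j) : Disjoint (SS k f T i) (SS k f T j) := by
  rw [Set.disjoint_left]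
  rintro (e | ⟨v, i', j'⟩ | ⟨c, i'⟩ | ⟨v, j'⟩) hx hy <;>
    simp only [SS, Set.mem_setOf_eq] at hx hy
  · exact (Set.disjoint_left.mp (hT i j hij)) hx hy
  · exact hij (hx ▸ hy)
  · exact hij (hx ▸ hy)
  · exact hij (Fin.ext (hx ▸ hy))

section Conn
variable (hk : 3 ≤ k) (T : Fin k → Set E) (i : Fin k)

def corebase (v : V) : WW V E k := .inr (v, some ((i:ℕ) : ZMod (2*k)))

lemma adj_symm (H : Multigraph (WW V E k) (EE V E k f)) (F : Set (EE V E k f)) :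
    Symmetric (H.AdjOn F) := by
  rintro a b ⟨e, he, h | h⟩
  · exact ⟨e, he, Or.inr h⟩
  · exact ⟨e, he, Or.inl h⟩

lemma core_chain (v : V) : ∀ j < 2*k,
    Relation.ReflTransGen ((HH k G f hk).AdjOn (SS k f T i))
      (.inr (v, some (zig k i j))) (corebase k i v) := by
  intro j hj
  induction j with
  | zero => rw [zig_zero]; exact .refl
  | succ j ih =>
    have hadj : (HH k G f hk).AdjOn (SS k f T i)
        (.inr (v, some (zig k i (j+1)))) (.inr (v, some (zig k i j))) := by
      refine ⟨.inr (.inl (v, i, ⟨j, by omega⟩)), ?_, ?_⟩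
      · show (i = i); rfl
      · right
        constructor <;> rfl
    exact (Relation.ReflTransGen.single hadj).trans (ih (by omega))

def clusterOf : WW V E k → V
  | .inl c => vtx G c
  | .inr (v, _) => v

lemma to_corebase (w : WW V E k) :
    Relation.ReflTransGen ((HH k G f hk).AdjOn (SS k f T i))
      w (corebase k i (clusterOf k G w)) := by
  rcases w with c | ⟨v, x | x⟩
  · refine Relation.ReflTransGen.single ⟨.inr (.inr (.inl (c, i))), rfl, Or.inl ?_⟩
    constructor <;> rfl
  · refine Relation.ReflTransGen.single ⟨.inr (.inr (.inr ⟨v, ⟨(i:ℕ), ?_⟩⟩)), rfl, Or.inl ?_⟩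
    · unfold rr; have := i.isLt; omega
    · constructor <;> rfl
  · obtain ⟨j, hj, hzig⟩ := zig_surj k hk i x
    rw [show (Sum.inr (v, some x) : WW V E k) = .inr (v, some (zig k i j)) from by rw [hzig]]
    exact core_chain k G f hk T i v j hj
end Conn

lemma SS_connected (hk : 3 ≤ k) (T : Fin k → Set E)
    (hT : ∀ i, G.IsSpanningTree (T i)) (i : Fin k) :
    (HH k G f hk).ConnectedOn (SS k f T i) := by
  constructor
  · intro e _; exact ⟨trivial, trivial⟩
  · intro u _ w _
    haveI : Std.Symm ((HH k G f hk).AdjOn (SS k f T i)) :=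
      ⟨fun a b h => adj_symm k f (HH k G f hk) (SS k f T i) h⟩
    have hsym : Symmetric (Relation.ReflTransGen ((HH k G f hk).AdjOn (SS k f T i))) :=
      fun a b h => Std.Symm.symm a b h
    have lift : ∀ a b : V, Relation.ReflTransGen (G.AdjOn (T i)) a b →
        Relation.ReflTransGen ((HH k G f hk).AdjOn (SS k f T i))
          (corebase k i a) (corebase k i b) := by
      intro a b h
      induction h with
      | refl => exact .refl
      | tail _ hstep ih =>
        refine ih.trans ?_
        obtain ⟨e, he, hcase⟩ := hstep
        rcases hcase with ⟨h1, h2⟩ | ⟨h1, h2⟩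
        · have s1 : corebase k i (G.fst e) = corebase k (V := V) (E := E) i
              (clusterOf k G (.inl (e, true))) := by
            simp [clusterOf, vtx]
          have s2 : corebase k i (G.snd e) = corebase k (V := V) (E := E) i
              (clusterOf k G (.inl (e, false))) := by
            simp [clusterOf, vtx]
          rw [← h1, ← h2, s1, s2]
          refine (hsym (to_corebase k G f hk T i (.inl (e, true)))).trans ?_
          refine Relation.ReflTransGen.head ⟨.inl e, he, Or.inl ⟨rfl, rfl⟩⟩ ?_
          exact to_corebase k G f hk T i (.inl (e, false))
        · have s1 : corebase k i (G.fst e) = corebase k (V := V) (E := E) i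
              (clusterOf k G (.inl (e, true))) := by
            simp [clusterOf, vtx]
          have s2 : corebase k i (G.snd e) = corebase k (V := V) (E := E) i
              (clusterOf k G (.inl (e, false))) := by
            simp [clusterOf, vtx]
          rw [← h1, ← h2, s2, s1]
          refine (hsym (to_corebase k G f hk T i (.inl (e, false)))).trans ?_
          refine Relation.ReflTransGen.head ⟨.inl e, he, Or.inr ⟨rfl, rfl⟩⟩ ?_
          exact to_corebase k G f hk T i (.inl (e, true))
    refine (to_corebase k G f hk T i u).trans ?_
    refine Relation.ReflTransGen.trans ?_ (hsym (to_corebase k G f hk T i w))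
    exact lift _ _ ((hT i).1.2 _ trivial _ trivial)

end Construction

/-- let `k ≥ 3` and suppose that every simple graph `H` with
`k` pairwise edge-disjoint spanning trees and `|E(H)|` divisible by `k` admits
an edge-decomposition into copies of the star `S_k` with `k` edges. Then every
graph `G` containing `k` pairwise edge-disjoint spanning trees has an
`f`-orientation for every `f : V → ZMod k` with `|E(G)| ≡ ∑ v, f v (mod k)`. -/
theorem mod_orientation_of_star_decomposition_hypothesis
    (k : ℕ) (hk : 3 ≤ k)
    (hyp : ∀ (W F : Type) [Fintype W] [Fintype F] (H : Multigraph W F),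
      H.IsSimple → H.HasEdgeDisjointSpanningTrees k → k ∣ Nat.card F →
        H.HasStarDecomposition k)
    {V E : Type} [Fintype V] [Fintype E] (G : Multigraph V E)
    (hG : G.HasEdgeDisjointSpanningTrees k)
    (f : V → ZMod k) (hf : (Nat.card E : ZMod k) = ∑ v, f v) :
    ∃ o : E → Bool, G.IsModOrientation k f o := by
  classical
  rcases isEmpty_or_nonempty V with hV | hV
  · haveI : IsEmpty E := ⟨fun e => hV.false (G.fst e)⟩
    exact ⟨fun _ => true, fun v => (hV.false v).elim⟩
  obtain ⟨T, hT, hTd⟩ := hG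
  haveI : NeZero (2*k) := ⟨by omega⟩
  haveI : NeZero k := ⟨by omega⟩
  haveI : Nonempty (WW V E k) := ⟨.inr (hV.some, none)⟩
  -- H has k edge-disjoint spanning trees
  have hHtrees : (HH k G f hk).HasEdgeDisjointSpanningTrees k := by
    have hconn := fun i => SS_connected k G f hk T hT i
    choose S' hsub htree using fun i => exists_spanningTree_subset (HH k G f hk) _ (hconn i)
    exact ⟨S', htree, fun i j hij =>
      Set.disjoint_of_subset (hsub i) (hsub j) (SS_disjoint k f T hTd i j hij)⟩
  -- k divides the number of edges of H
  have hrrcast : ∀ v : V, ((rr k f v : ℕ) : ZMod k) = - f v := by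
    intro v
    unfold rr
    push_cast
    rw [ZMod.natCast_self, ZMod.natCast_val, ZMod.cast_id]
    ring
  have hdvd : k ∣ Nat.card (EE V E k f) := by
    have hcast : (Nat.card (EE V E k f) : ZMod k) = 0 := by
      rw [Nat.card_eq_fintype_card]
      simp only [Fintype.card_sum, Fintype.card_prod, Fintype.card_sigma,
        Fintype.card_fin, Fintype.card_bool]
      push_cast
      simp only [hrrcast, ZMod.natCast_self]
      rw [show ((Fintype.card E : ℕ) : ZMod k) = ∑ v, f v from by
        rw [← Nat.card_eq_fintype_card]; exact hf]
      ring_nf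
      simp [Finset.sum_neg_distrib]
    exact (ZMod.natCast_eq_zero_iff _ _).mp hcast
  -- apply the hypothesis to get a star decomposition, hence an orientation of H
  have hSD := hyp (WW V E k) (EE V E k f) (HH k G f hk) (HH_simple k G f hk) hHtrees hdvd
  obtain ⟨oH, hoH⟩ := exists_orientation_of_starDecomp (HH k G f hk) k hSD
  refine ⟨fun e => oH (.inl e), ?_⟩
  intro v
  -- sum of outdegrees over the cluster of v
  have h0 : ((∑ w ∈ Finset.univ.filter (fun w => clusterOf k G w = v),
      (HH k G f hk).outDeg oH w : ℕ) : ZMod k) = 0 := by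
    rw [Nat.cast_sum]
    exact Finset.sum_eq_zero (fun w _ => hoH w)
  rw [cluster_sum (HH k G f hk) oH (clusterOf k G) v] at h0
  rw [filter_sum_card, filter_sum_card, filter_sum_card] at h0
  -- the main part counts the out-degree of v in G
  have hmain : (Finset.univ.filter (fun e : E =>
      clusterOf k G ((HH k G f hk).tail oH (.inl e)) = v)).card
        = G.outDeg (fun e => oH (.inl e)) v := by
    rw [outDeg_eq_card]
    congr 1
    ext e
    have : clusterOf k G ((HH k G f hk).tail oH (.inl e))
        = G.tail (fun e => oH (.inl e)) e := by
      unfold Multigraph.tail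
      cases hb : oH (.inl e) <;> simp [hb, HH, Hfst, Hsnd, clusterOf, vtx]
    simp [this]
  have hcore : (Finset.univ.filter (fun x : V × Fin k × Fin (2*k-1) =>
      clusterOf k G ((HH k G f hk).tail oH (.inr (.inl x))) = v)).card
        = (Finset.univ.filter (fun a : V => a = v)).card * Fintype.card (Fin k × Fin (2*k-1)) := by
    rw [← filter_fst_pred_card (fun a : V => a = v)]
    congr 1
    ext x
    obtain ⟨a, i, j⟩ := x
    have : clusterOf k G ((HH k G f hk).tail oH (.inr (.inl (a, i, j)))) = a := by
      unfold Multigraph.tail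
      cases hb : oH (.inr (.inl (a, i, j))) <;> simp [hb, HH, Hfst, Hsnd, clusterOf]
    simp [this]
  have hcopy : (Finset.univ.filter (fun x : (E × Bool) × Fin k =>
      clusterOf k G ((HH k G f hk).tail oH (.inr (.inr (.inl x)))) = v)).card
        = (Finset.univ.filter (fun c : E × Bool => vtx G c = v)).card * Fintype.card (Fin k) := by
    rw [← filter_fst_pred_card (fun c : E × Bool => vtx G c = v)]
    congr 1
    ext x
    obtain ⟨c, i⟩ := x
    have : clusterOf k G ((HH k G f hk).tail oH (.inr (.inr (.inl (c, i))))) = vtx G c := by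
      unfold Multigraph.tail
      cases hb : oH (.inr (.inr (.inl (c, i)))) <;> simp [hb, HH, Hfst, Hsnd, clusterOf]
    simp [this]
  have hz : (Finset.univ.filter (fun x : (v' : V) × Fin (rr k f v') =>
      clusterOf k G ((HH k G f hk).tail oH (.inr (.inr (.inr x)))) = v)).card
        = rr k f v := by
    rw [← filter_sigma_card (rr k f) v]
    congr 1
    ext x
    obtain ⟨a, j⟩ := x
    have : clusterOf k G ((HH k G f hk).tail oH (.inr (.inr (.inr ⟨a, j⟩)))) = a := by
      unfold Multigraph.tail
      cases hb : oH (.inr (.inr (.inr ⟨a, j⟩))) <;> simp [hb, HH, Hfst, Hsnd, clusterOf]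
    simp [this]
  rw [hmain, hcore, hcopy, hz, Fintype.card_prod, Fintype.card_fin, Fintype.card_fin] at h0
  have hknat : ((k : ℕ) : ZMod k) = 0 := ZMod.natCast_self k
  push_cast at h0
  rw [hrrcast v] at h0
  rw [hknat] at h0
  ring_nf at h0
  linear_combination h0
end
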